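/- Let F be a field, V a finite-dimensional F-vector space, F'/F a field extension, and W ⊆ V ⊗_F F' a line whose Aut(F'/F)-conjugates span V ⊗_F F'. Then the stabilizer K of W in End_F(V) is a field extension of F (with F embedded as scalar multiples of the identity), and via the induced K-module structure on V one has [K : F] ≤ dim_F V. -/

import Mathlib

open TensorProduct

set_option maxHeartbeats 1000000
set_option synthInstance.maxHeartbeats 1000000

/-- The stabilizer of `W` in `End_F(V)`, as an `F`-subalgebra. -/
def stabilizerSubalgebra (F F' : Type*) [Field F] [Field F'] [Algebra F F']
    (V : Type*) [AddCommGroup V] [Module F V]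
    (W : Submodule F' (F' ⊗[F] V)) : Subalgebra F (Module.End F V) where
  carrier := {φ : Module.End F V | ∀ x ∈ W, LinearMap.baseChange F' φ x ∈ W}
  mul_mem' := by
    intro a b ha hb x hx
    rw [LinearMap.baseChange_mul]
    exact ha _ (hb _ hx)
  add_mem' := by
    intro a b ha hb x hx
    rw [LinearMap.baseChange_add]
    exact W.add_mem (ha x hx) (hb x hx)
  algebraMap_mem' := by
    intro r x hx
    have h1 : algebraMap F (Module.End F V) r = r • (1 : Module.End F V) := by
      ext v; simp [Module.algebraMap_end_apply]
    rw [h1, LinearMap.baseChange_smul]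
    have h2 : (r • LinearMap.baseChange F' (1 : Module.End F V)) x
        = (algebraMap F F' r) • x := by
      simp [LinearMap.baseChange_one, algebraMap_smul]
    rw [h2]
    exact W.smul_mem _ hx

lemma mem_stabilizerSubalgebra_iff (F F' : Type*) [Field F] [Field F'] [Algebra F F']
    (V : Type*) [AddCommGroup V] [Module F V]
    (W : Submodule F' (F' ⊗[F] V)) (φ : Module.End F V) :
    φ ∈ stabilizerSubalgebra F F' V W ↔ ∀ x ∈ W, LinearMap.baseChange F' φ x ∈ W :=
  Iff.rfl

/-- The stabilizer `K` of such a line `W` in `End_F(V)` is a field extension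
of `F` (an `F`-subalgebra, so `F` sits inside as scalars), and `[K : F] ≤ dim_F V`. -/
theorem stabilizer_isField_finrank_le
    (F F' : Type*) [Field F] [Field F'] [Algebra F F']
    (V : Type*) [AddCommGroup V] [Module F V] [FiniteDimensional F V]
    (W : Submodule F' (F' ⊗[F] V))
    (hW : Module.finrank F' ↥W = 1)
    (hspan : Submodule.span F'
      (⋃ σ : F' ≃ₐ[F] F',
        (LinearMap.rTensor V σ.toLinearMap) '' (W : Set (F' ⊗[F] V))) = ⊤) :
    ∃ K : Subalgebra F (Module.End F V),
      ((K : Set (Module.End F V)) =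
        {φ : Module.End F V | ∀ x ∈ W, LinearMap.baseChange F' φ x ∈ W}) ∧
      IsField ↥K ∧
      Module.finrank F ↥K ≤ Module.finrank F V := by
  classical
  -- Key vanishing lemma: an endomorphism whose base change kills `W` is zero.
  have keyA : ∀ χ : Module.End F V,
      (∀ x ∈ W, LinearMap.baseChange F' χ x = 0) → χ = 0 := by
    intro χ hχ
    have hcomm : ∀ (σ : F' ≃ₐ[F] F') (z : F' ⊗[F] V),
        LinearMap.baseChange F' χ (LinearMap.rTensor V σ.toLinearMap z)
          = LinearMap.rTensor V σ.toLinearMap (LinearMap.baseChange F' χ z) := by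
      intro σ z
      induction z using TensorProduct.induction_on with
      | zero => simp
      | tmul a v => simp
      | add x y hx hy => simp only [map_add, hx, hy]
    have hzero : ∀ x : F' ⊗[F] V, LinearMap.baseChange F' χ x = 0 := by
      intro x
      have hx : x ∈ Submodule.span F'
          (⋃ σ : F' ≃ₐ[F] F',
            (LinearMap.rTensor V σ.toLinearMap) '' (W : Set (F' ⊗[F] V))) := by
        rw [hspan]; trivial
      induction hx using Submodule.span_induction with
      | mem y hy =>
          obtain ⟨_, ⟨σ, rfl⟩, w, hw, rfl⟩ := hy
          rw [hcomm σ w, hχ w hw, map_zero]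
      | zero => simp
      | add y z _ _ hy hz => rw [map_add, hy, hz, add_zero]
      | smul c y _ hy => rw [map_smul, hy, smul_zero]
    have hlt : LinearMap.lTensor F' χ = 0 := by
      ext a v
      simpa using hzero (a ⊗ₜ[F] v)
    exact ((Module.FaithfullyFlat.zero_iff_lTensor_zero F F' χ).2 hlt)
  -- A generator of the line `W`.
  haveI := Module.Free.of_divisionRing F' W
  obtain ⟨w0, hw0ne, hgen⟩ := (finrank_eq_one_iff' (K := F') (V := ↥W)).1 hW
  -- Eigenvalue lemma: any stabilizing endomorphism acts on `W` by a scalar.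
  have eig : ∀ φ : Module.End F V, (∀ x ∈ W, LinearMap.baseChange F' φ x ∈ W) →
      ∃ c : F', ∀ x ∈ W, LinearMap.baseChange F' φ x = c • x := by
    intro φ hφ
    obtain ⟨c, hc⟩ := hgen ⟨LinearMap.baseChange F' φ w0.1, hφ w0.1 w0.2⟩
    have hc' : LinearMap.baseChange F' φ w0.1 = c • w0.1 := by
      have := congrArg Subtype.val hc
      simpa using this.symm
    refine ⟨c, ?_⟩
    intro x hx
    obtain ⟨a, ha⟩ := hgen ⟨x, hx⟩
    have ha' : a • w0.1 = x := congrArg Subtype.val ha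
    rw [← ha', map_smul, hc', smul_smul, smul_smul, mul_comm]
  set K : Subalgebra F (Module.End F V) := stabilizerSubalgebra F F' V W with hKdef
  -- nonzero elements of K have nonzero eigenvalue
  have eigne : ∀ (φ : Module.End F V) (c : F'),
      (∀ x ∈ W, LinearMap.baseChange F' φ x = c • x) → φ ≠ 0 → c ≠ 0 := by
    intro φ c hc hne h0
    apply hne
    apply keyA
    intro x hx
    rw [hc x hx, h0, zero_smul]
  -- commutativity
  have comm : ∀ a b : Module.End F V, a ∈ K → b ∈ K → a * b = b * a := by
    intro a b ha hb
    obtain ⟨ca, hca⟩ := eig a ha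
    obtain ⟨cb, hcb⟩ := eig b hb
    have h := keyA (a * b - b * a) ?_
    · exact sub_eq_zero.mp h
    intro x hx
    have h1 : LinearMap.baseChange F' (a * b) x = (cb * ca) • x := by
      rw [LinearMap.baseChange_mul, Module.End.mul_apply, hcb x hx, map_smul,
        hca x hx, smul_smul]
    have h2 : LinearMap.baseChange F' (b * a) x = (ca * cb) • x := by
      rw [LinearMap.baseChange_mul, Module.End.mul_apply, hca x hx, map_smul,
        hcb x hx, smul_smul]
    rw [LinearMap.baseChange_sub, LinearMap.sub_apply, h1, h2, mul_comm, sub_self]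
  -- cancellation: every nonzero element of K has a right inverse in K
  have inv : ∀ a : ↥K, a ≠ 0 → ∃ b : ↥K, a * b = 1 := by
    intro a ha
    have hane : (a : Module.End F V) ≠ 0 := by
      intro h; exact ha (Subtype.ext h)
    obtain ⟨ca, hca⟩ := eig a.1 a.2
    have hcane : ca ≠ 0 := eigne a.1 ca hca hane
    have hinj : Function.Injective (LinearMap.mulLeft F a) := by
      rw [injective_iff_map_eq_zero]
      intro b hb
      have hb' : (a : Module.End F V) * (b : Module.End F V) = 0 := by
        have := congrArg Subtype.val hb
        simpa using this
      apply Subtype.ext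
      show (b : Module.End F V) = 0
      apply keyA
      intro x hx
      have h1 : LinearMap.baseChange F' ((a : Module.End F V) * (b : Module.End F V)) x = 0 := by
        rw [hb']; simp
      rw [LinearMap.baseChange_mul, Module.End.mul_apply,
        hca _ (b.2 x hx)] at h1
      exact (smul_eq_zero.mp h1).resolve_left hcane
    have hsurj : Function.Surjective (LinearMap.mulLeft F a) :=
      LinearMap.injective_iff_surjective.mp hinj
    obtain ⟨b, hb⟩ := hsurj 1
    exact ⟨b, hb⟩
  -- V is nontrivial
  have hVnt : Nontrivial V := by
    have h1 : 1 ≤ Module.finrank F V := by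
      calc 1 = Module.finrank F' ↥W := hW.symm
        _ ≤ Module.finrank F' (F' ⊗[F] V) := W.finrank_le
        _ = Module.finrank F V := Module.finrank_baseChange
    exact Module.nontrivial_of_finrank_pos (R := F) (by omega)
  obtain ⟨v0, hv0⟩ := exists_ne (0 : V)
  refine ⟨K, rfl, ⟨?_, ?_, ?_⟩, ?_⟩
  · -- exists_pair_ne
    refine ⟨0, 1, ?_⟩
    intro h
    have h0 : (0 : Module.End F V) = 1 := congrArg Subtype.val h
    have := congrFun (congrArg DFunLike.coe h0) v0
    simp at this
    exact hv0 this.symm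
  · -- mul_comm
    intro a b
    exact Subtype.ext (comm a.1 b.1 a.2 b.2)
  · -- mul_inv_cancel
    intro a ha
    exact inv a ha
  · -- finrank bound
    have einj : Function.Injective
        ({ toFun := fun φ : ↥K => (φ : Module.End F V) v0
           map_add' := by intros; rfl
           map_smul' := by intros; rfl } : ↥K →ₗ[F] V) := by
      rw [injective_iff_map_eq_zero]
      intro φ hφ
      by_contra hne
      obtain ⟨ψ, hψ⟩ := inv φ hne
      have hψ' : (ψ : Module.End F V) * (φ : Module.End F V) = 1 := by
        rw [← comm φ.1 ψ.1 φ.2 ψ.2]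
        have := congrArg Subtype.val hψ
        simpa using this
      have hv : v0 = 0 := by
        have h1 : ((ψ : Module.End F V) * (φ : Module.End F V)) v0 = v0 := by
          rw [hψ']; simp
        rw [Module.End.mul_apply] at h1
        rw [show (φ : Module.End F V) v0 = 0 from hφ] at h1
        simpa using h1.symm
      exact hv0 hv
    exact LinearMap.finrank_le_finrank_of_injective einj
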